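/- Let h : ℝ → ℝ be differentiable with h' integrable on ℝ, h(x) → 0 as x → −∞ and h(x) → 1 as x → +∞. Then for every bounded continuous function ψ : ℝ → ℝ, the integral ∫_ℝ (h(x/ε)² − h(x/ε))·(1/ε)·h'(x/ε)·ψ(x) dx tends to −(1/6)·ψ(0) as ε → 0⁺. -/

import Mathlib

open MeasureTheory Filter

theorem stmt_7 (h : ℝ → ℝ) (hd : Differentiable ℝ h)
    (hi : Integrable (deriv h))
    (h0 : Tendsto h atBot (nhds 0)) (h1 : Tendsto h atTop (nhds 1))
    (ψ : ℝ → ℝ) (hc : Continuous ψ) (hb : ∃ C : ℝ, ∀ x, |ψ x| ≤ C) :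
    Tendsto (fun ε : ℝ => ∫ x, (h (x / ε) ^ 2 - h (x / ε)) * ((1 / ε) * deriv h (x / ε)) * ψ x)
      (nhdsWithin 0 (Set.Ioi 0)) (nhds (-(1 / 6) * ψ 0)) := by
  obtain ⟨C, hC⟩ := hb
  have hcont : Continuous h := hd.continuous
  -- h is bounded
  have hbdd : ∃ M : ℝ, ∀ x, |h x| ≤ M := by
    obtain ⟨B, hB⟩ := eventually_atBot.1 (h0.eventually (Metric.ball_mem_nhds (0:ℝ) one_pos))
    obtain ⟨A, hA⟩ := eventually_atTop.1 (h1.eventually (Metric.ball_mem_nhds (1:ℝ) one_pos))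
    obtain ⟨M0, hM0⟩ := (isCompact_Icc (a := B) (b := A)).exists_bound_of_continuousOn
      hcont.continuousOn
    refine ⟨max M0 2, fun x => ?_⟩
    rcases le_total x B with hx | hx
    · have := hB x hx
      simp only [Metric.mem_ball, Real.dist_eq, sub_zero] at this
      exact le_trans this.le (by norm_num)
    rcases le_total x A with hx' | hx'
    · exact le_trans (by simpa using hM0 x ⟨hx, hx'⟩) (le_max_left _ _)
    · have := hA x hx'
      simp only [Metric.mem_ball, Real.dist_eq] at this
      have : |h x| ≤ 2 := by
        have := abs_sub_abs_le_abs_sub (h x) 1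
        simp only [abs_one] at this
        linarith [le_of_lt (hA x hx' |> fun t => by simpa [Real.dist_eq] using t)]
      exact le_trans this (le_max_right _ _)
  obtain ⟨M, hM⟩ := hbdd
  set g : ℝ → ℝ := fun y => (h y ^ 2 - h y) * deriv h y with hg_def
  have hgmeas : AEStronglyMeasurable g volume :=
    ((hcont.pow 2).sub hcont).aestronglyMeasurable.mul hi.aestronglyMeasurable
  have hgint : Integrable g := by
    apply hi.bdd_mul ((hcont.pow 2).sub hcont).aestronglyMeasurable
    exact (ae_of_all _ fun x => by
      have := hM x
      calc ‖h x ^ 2 - h x‖ ≤ ‖h x ^2‖ + ‖h x‖ := norm_sub_le _ _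
        _ ≤ M^2 + M := by
          simp only [Real.norm_eq_abs, abs_pow]
          have h0M : 0 ≤ M := le_trans (abs_nonneg _) this
          gcongr : ∀ᵐ x ∂volume, ‖h x ^ 2 - h x‖ ≤ M^2 + M)
  -- ∫ g = -1/6
  have hint_g : ∫ y, g y = -(1/6) := by
    have hF : ∀ x, HasDerivAt (fun y => h y ^ 3 / 3 - h y ^ 2 / 2) (g x) x := by
      intro x
      have hx := (hd x).hasDerivAt
      have : HasDerivAt (fun y => h y ^ 3 / 3 - h y ^ 2 / 2)
          ((3 * h x ^ 2 * deriv h x) / 3 - (2 * h x ^ 1 * deriv h x) / 2) x := by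
        exact (((hx.pow 3).div_const 3).sub ((hx.pow 2).div_const 2))
      convert this using 1
      simp [hg_def]; ring
    have hbot : Tendsto (fun y => h y ^ 3 / 3 - h y ^ 2 / 2) atBot (nhds 0) := by
      have := ((h0.pow 3).div_const 3).sub ((h0.pow 2).div_const 2)
      simpa using this
    have htop : Tendsto (fun y => h y ^ 3 / 3 - h y ^ 2 / 2) atTop (nhds (-(1/6))) := by
      have := ((h1.pow 3).div_const 3).sub ((h1.pow 2).div_const 2)
      convert this using 2
      norm_num
    have := MeasureTheory.integral_of_hasDerivAt_of_tendsto hF hgint hbot htop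
    simpa using this
  -- rewrite integrals via substitution, for ε > 0
  have key : ∀ ε : ℝ, 0 < ε →
      (∫ x, (h (x / ε) ^ 2 - h (x / ε)) * ((1 / ε) * deriv h (x / ε)) * ψ x)
        = ∫ y, g y * ψ (ε * y) := by
    intro ε hε
    have hne : ε ≠ 0 := ne_of_gt hε
    have : (fun x => (h (x / ε) ^ 2 - h (x / ε)) * ((1 / ε) * deriv h (x / ε)) * ψ x)
        = fun x => (fun y => (1/ε) * (g y * ψ (ε * y))) (x / ε) := by
      funext x
      simp only [hg_def]
      rw [mul_div_cancel₀ _ hne]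
      ring
    rw [this, MeasureTheory.Measure.integral_comp_div (fun y => (1/ε) * (g y * ψ (ε * y))) ε,
      abs_of_pos hε]
    rw [integral_const_mul, smul_eq_mul]
    field_simp
  -- dominated convergence
  have hCnn : 0 ≤ C := le_trans (abs_nonneg _) (hC 0)
  have main : Tendsto (fun ε : ℝ => ∫ y, g y * ψ (ε * y))
      (nhdsWithin 0 (Set.Ioi 0)) (nhds (-(1/6) * ψ 0)) := by
    have hlim : ∫ y, g y * ψ 0 = -(1/6) * ψ 0 := by
      rw [integral_mul_const, hint_g]
    rw [← hlim]
    apply tendsto_integral_filter_of_dominated_convergence (fun y => |g y| * C)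
    · filter_upwards with ε
      exact hgmeas.mul ((hc.comp (continuous_const.mul continuous_id)).aestronglyMeasurable)
    · filter_upwards with ε
      filter_upwards with y
      simp only [Real.norm_eq_abs, abs_mul]
      exact mul_le_mul_of_nonneg_left (hC _) (abs_nonneg _)
    · exact hgint.abs.mul_const C
    · filter_upwards with y
      have : Tendsto (fun ε : ℝ => ε * y) (nhdsWithin 0 (Set.Ioi 0)) (nhds 0) := by
        have : Tendsto (fun ε : ℝ => ε * y) (nhds 0) (nhds (0 * y)) :=
          (continuous_id.mul continuous_const).tendsto 0
        rw [zero_mul] at this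
        exact this.mono_left nhdsWithin_le_nhds
      exact tendsto_const_nhds.mul ((hc.tendsto 0).comp this)
  refine main.congr' ?_
  filter_upwards [self_mem_nhdsWithin] with ε (hε : ε ∈ Set.Ioi 0)
  exact (key ε hε).symm
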